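/- Let α > 0 and let N ≥ 1, i ≥ 1 be integers. Then Σ_{j=1}^{i} j · (Nα|α)_j · S_α(i,j) = N·([Nα]_i − [(N−1)α]_i), where (x|y)_n := Π_{k=0}^{n−1}(x − ky), [x]_n := Π_{k=0}^{n−1}(x + k), and S_α(i,j) := S(i,j;−1,α,0) are the generalized Stirling numbers defined by S_α(0,0) = 1, S_α(i,j) = 0 for j < 0 or j > i, and S_α(i+1,j) = S_α(i,j−1) + (i + αj)·S_α(i,j). Equivalently, the number K_i of occupied tables in the Chinese restaurant process with parameters κ = α, θ = Nα, having distribution P(K_i = j) = (Nα|α)_j S_α(i,j)/[Nα]_i, has mean E(K_i) = N − N·[(N−1)α]_i/[Nα]_i. -/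

import Mathlib

/-- the generalized Stirling numbers `S(i,j; a,b,r)` of Hsu and Shiue, defined by
`S(0,0) = 1`, `S(i,j) = 0` for `j > i` (automatic below), and the recursion
`S(i+1,j) = S(i,j-1) + (jb - ia + r) S(i,j)` (with `S(i,-1) := 0`). -/
noncomputable def gstir (a b r : ℝ) : ℕ → ℕ → ℝ
  | 0, 0 => 1
  | 0, _ + 1 => 0
  | i + 1, 0 => (r - i * a) * gstir a b r i 0
  | i + 1, j + 1 => gstir a b r i j + (((j : ℝ) + 1) * b - i * a + r) * gstir a b r i (j + 1)

/-- the generalized factorial `(x|y)_n := ∏_{k=0}^{n-1} (x - k y)`. -/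
noncomputable def genFall (x y : ℝ) (n : ℕ) : ℝ := ∏ k ∈ Finset.range n, (x - k * y)

/-- the rising factorial `[x]_n := x (x+1) ⋯ (x+n-1)`. -/
noncomputable def risingFac (x : ℝ) (n : ℕ) : ℝ := ∏ k ∈ Finset.range n, (x + k)

/-- for `α > 0` and integers `N ≥ 1`, `i ≥ 1`,
`∑_{j=1}^{i} j (Nα|α)_j S_α(i,j) = N([Nα]_i - [(N-1)α]_i)` where `S_α(i,j) = S(i,j;-1,α,0)`;
equivalently, the Chinese restaurant table count `K_i` with distribution
`P(K_i = j) = (Nα|α)_j S_α(i,j)/[Nα]_i` has mean `E(K_i) = N - N [(N-1)α]_i/[Nα]_i`. -/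
lemma gstir_eq_zero (a b r : ℝ) : ∀ i j, i < j → gstir a b r i j = 0 := by
  intro i
  induction i with
  | zero => intro j hj; match j, hj with
    | j + 1, _ => rfl
  | succ i ih =>
    intro j hj
    match j, hj with
    | j + 1, hj =>
      have h1 : gstir a b r i j = 0 := ih j (by omega)
      have h2 : gstir a b r i (j+1) = 0 := ih (j+1) (by omega)
      show gstir a b r i j + (((j : ℝ) + 1) * b - i * a + r) * gstir a b r i (j + 1) = 0
      rw [h1, h2]; ring

lemma genFall_succ (x y : ℝ) (n : ℕ) : genFall x y (n+1) = genFall x y n * (x - n * y) :=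
  Finset.prod_range_succ _ _

lemma risingFac_succ (x : ℝ) (n : ℕ) : risingFac x (n+1) = risingFac x n * (x + n) :=
  Finset.prod_range_succ _ _

lemma shift_sum (G : ℕ → ℝ) (n : ℕ) :
    ∑ j ∈ Finset.range n, G (j+1) = ∑ j ∈ Finset.range n, G j + G n - G 0 := by
  have h1 := Finset.sum_range_succ' G n
  have h2 := Finset.sum_range_succ G n
  linarith

lemma keyA (x α : ℝ) : ∀ i, ∑ j ∈ Finset.range (i+1),
    genFall x α j * gstir (-1) α 0 i j = risingFac x i := by
  intro i
  induction i with
  | zero => simp [genFall, risingFac, gstir]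
  | succ i ih =>
    have hT : gstir (-1) α 0 i (i+1) = 0 := gstir_eq_zero _ _ _ i (i+1) (by omega)
    have hrec : ∀ j : ℕ, gstir (-1) α 0 (i+1) (j+1)
        = gstir (-1) α 0 i j + (((j:ℝ)+1)*α + i) * gstir (-1) α 0 i (j+1) := by
      intro j
      show gstir (-1) α 0 i j + (((j : ℝ) + 1) * α - i * (-1) + 0) * gstir (-1) α 0 i (j + 1) = _
      ring_nf
    have h0 : gstir (-1) α 0 (i+1) 0 = (i:ℝ) * gstir (-1) α 0 i 0 := by
      show ((0:ℝ) - i * (-1)) * gstir (-1) α 0 i 0 = _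
      ring
    rw [Finset.sum_range_succ']
    have step1 : ∑ j ∈ Finset.range (i+1), genFall x α (j+1) * gstir (-1) α 0 (i+1) (j+1)
        = ∑ j ∈ Finset.range (i+1), ((x - j*α) * (genFall x α j * gstir (-1) α 0 i j)
            + (((j:ℝ)+1)*α + i) * (genFall x α (j+1) * gstir (-1) α 0 i (j+1))) := by
      apply Finset.sum_congr rfl
      intro j _
      rw [hrec, genFall_succ]
      ring
    rw [step1, Finset.sum_add_distrib]
    have step2 : ∑ j ∈ Finset.range (i+1),
        (((j:ℝ)+1)*α + i) * (genFall x α (j+1) * gstir (-1) α 0 i (j+1))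
        = ∑ j ∈ Finset.range (i+1), ((j:ℝ)*α + i) * (genFall x α j * gstir (-1) α 0 i j)
          + (((i:ℝ)+1)*α + i) * (genFall x α (i+1) * gstir (-1) α 0 i (i+1))
          - ((0:ℝ)*α + i) * (genFall x α 0 * gstir (-1) α 0 i 0) := by
      have := shift_sum (fun j => ((j:ℝ)*α + i) * (genFall x α j * gstir (-1) α 0 i j)) (i+1)
      simpa using this
    rw [step2, hT]
    have hF0 : genFall x α 0 = 1 := by simp [genFall]
    rw [hF0, h0]
    have : ∑ j ∈ Finset.range (i+1), (x - j*α) * (genFall x α j * gstir (-1) α 0 i j)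
        + ∑ j ∈ Finset.range (i+1), ((j:ℝ)*α + i) * (genFall x α j * gstir (-1) α 0 i j)
        = (x + i) * ∑ j ∈ Finset.range (i+1), genFall x α j * gstir (-1) α 0 i j := by
      rw [Finset.mul_sum, ← Finset.sum_add_distrib]
      apply Finset.sum_congr rfl
      intro j _; ring
    rw [risingFac_succ, ← ih]
    push_cast
    linarith [this]

lemma keyB (x α : ℝ) (hα : α ≠ 0) : ∀ i, ∑ j ∈ Finset.range (i+1),
    (j:ℝ) * genFall x α j * gstir (-1) α 0 i j
      = (x/α) * (risingFac x i - risingFac (x - α) i) := by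
  intro i
  induction i with
  | zero => simp [genFall, risingFac, gstir]
  | succ i ih =>
    have hT : gstir (-1) α 0 i (i+1) = 0 := gstir_eq_zero _ _ _ i (i+1) (by omega)
    have hrec : ∀ j : ℕ, gstir (-1) α 0 (i+1) (j+1)
        = gstir (-1) α 0 i j + (((j:ℝ)+1)*α + i) * gstir (-1) α 0 i (j+1) := by
      intro j
      show gstir (-1) α 0 i j + (((j : ℝ) + 1) * α - i * (-1) + 0) * gstir (-1) α 0 i (j + 1) = _
      ring_nf
    rw [Finset.sum_range_succ']
    have step1 : ∑ j ∈ Finset.range (i+1),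
        ((j+1 : ℕ):ℝ) * genFall x α (j+1) * gstir (-1) α 0 (i+1) (j+1)
        = ∑ j ∈ Finset.range (i+1),
            (((j:ℝ)+1)*(x - j*α) * (genFall x α j * gstir (-1) α 0 i j)
            + ((j:ℝ)+1) * (((j:ℝ)+1)*α + i) * (genFall x α (j+1) * gstir (-1) α 0 i (j+1))) := by
      apply Finset.sum_congr rfl
      intro j _
      rw [hrec, genFall_succ]
      push_cast
      ring
    rw [step1, Finset.sum_add_distrib]
    have step2 : ∑ j ∈ Finset.range (i+1),
        ((j:ℝ)+1) * (((j:ℝ)+1)*α + i) * (genFall x α (j+1) * gstir (-1) α 0 i (j+1))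
        = ∑ j ∈ Finset.range (i+1),
            (j:ℝ) * ((j:ℝ)*α + i) * (genFall x α j * gstir (-1) α 0 i j)
          + ((i:ℝ)+1) * (((i:ℝ)+1)*α + i) * (genFall x α (i+1) * gstir (-1) α 0 i (i+1))
          - (0:ℝ) * ((0:ℝ)*α + i) * (genFall x α 0 * gstir (-1) α 0 i 0) := by
      have := shift_sum
        (fun j => (j:ℝ) * ((j:ℝ)*α + i) * (genFall x α j * gstir (-1) α 0 i j)) (i+1)
      simpa using this
    rw [step2, hT]
    have hcomb : ∑ j ∈ Finset.range (i+1),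
        ((j:ℝ)+1)*(x - j*α) * (genFall x α j * gstir (-1) α 0 i j)
        + ∑ j ∈ Finset.range (i+1),
            (j:ℝ) * ((j:ℝ)*α + i) * (genFall x α j * gstir (-1) α 0 i j)
        = (x + i - α) * ∑ j ∈ Finset.range (i+1),
            (j:ℝ) * genFall x α j * gstir (-1) α 0 i j
          + x * ∑ j ∈ Finset.range (i+1), genFall x α j * gstir (-1) α 0 i j := by
      rw [Finset.mul_sum, Finset.mul_sum, ← Finset.sum_add_distrib, ← Finset.sum_add_distrib]
      apply Finset.sum_congr rfl
      intro j _; ring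
    have hA := keyA x α i
    rw [risingFac_succ, risingFac_succ]
    have hgoal : (x + i - α) * ((x/α) * (risingFac x i - risingFac (x-α) i))
        + x * risingFac x i
        = x / α * (risingFac x i * (x + i) - risingFac (x-α) i * (x - α + i)) := by
      field_simp
      ring
    rw [ih, hA] at hcomb
    push_cast
    simp only [mul_zero, zero_mul, add_zero, sub_zero, zero_add]
    linarith [hcomb, hgoal]

theorem statement15 (α : ℝ) (hα : 0 < α) (N i : ℕ) (hN : 1 ≤ N) (hi : 1 ≤ i) :
    (∑ j ∈ Finset.Icc 1 i, (j : ℝ) * genFall ((N : ℝ) * α) α j * gstir (-1) α 0 i j) =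
      (N : ℝ) * (risingFac ((N : ℝ) * α) i - risingFac (((N : ℝ) - 1) * α) i) ∧
    (∑ j ∈ Finset.Icc 1 i,
        (j : ℝ) * (genFall ((N : ℝ) * α) α j * gstir (-1) α 0 i j /
          risingFac ((N : ℝ) * α) i)) =
      (N : ℝ) - (N : ℝ) * risingFac (((N : ℝ) - 1) * α) i / risingFac ((N : ℝ) * α) i := by
  have hα' : α ≠ 0 := ne_of_gt hα
  set x : ℝ := (N:ℝ) * α with hx
  have hIcc : ∀ (f : ℕ → ℝ), f 0 = 0 →
      ∑ j ∈ Finset.Icc 1 i, f j = ∑ j ∈ Finset.range (i+1), f j := by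
    intro f hf
    rw [Finset.sum_range_succ' f i, hf, add_zero]
    rw [show Finset.Icc 1 i = Finset.Ico 1 (i+1) by rfl, Finset.sum_Ico_eq_sum_range]
    simp [add_comm]
  have h1 : ∑ j ∈ Finset.Icc 1 i, (j : ℝ) * genFall x α j * gstir (-1) α 0 i j
      = (N : ℝ) * (risingFac x i - risingFac (x - α) i) := by
    rw [hIcc _ (by simp), keyB x α hα' i]
    rw [hx]
    field_simp
  have hxα : ((N:ℝ) - 1) * α = x - α := by rw [hx]; ring
  have hRpos : 0 < risingFac x i := by
    apply Finset.prod_pos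
    intro k _
    have : (0:ℝ) ≤ k := Nat.cast_nonneg k
    have hxpos : 0 < x := by
      rw [hx]
      have : (1:ℝ) ≤ (N:ℝ) := by exact_mod_cast hN
      nlinarith
    linarith
  have hR : risingFac x i ≠ 0 := ne_of_gt hRpos
  constructor
  · rw [hxα]; exact h1
  · rw [hxα]
    have h2 : ∑ j ∈ Finset.Icc 1 i,
        (j : ℝ) * (genFall x α j * gstir (-1) α 0 i j / risingFac x i)
        = (∑ j ∈ Finset.Icc 1 i, (j : ℝ) * genFall x α j * gstir (-1) α 0 i j) / risingFac x i := by
      rw [Finset.sum_div]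
      apply Finset.sum_congr rfl
      intro j _; ring
    rw [h2, h1]
    field_simp
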